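/- Let L be a set of s non-negative integers with L ≠ {0, 1, ..., s−1}, 0 ∈ L, n ≥ 3s², and let F ⊆ 2^[n] be an L-intersecting Sperner family. Then for every x ∈ [n], the subfamily F_x = {F ∈ F : x ∈ F} satisfies |F_x| ≤ ∑_{i=0}^{s-1} C(n−1, i). -/

import Mathlib

open Finset

namespace Stmt17Aux

variable {α : Type*} [DecidableEq α]

/-- indicator of `T ⊆ S` -/
noncomputable def eT (T : Finset α) : Finset α → ℚ := fun S => if T ⊆ S then 1 else 0

lemma mul_eT (A T : Finset α) (hT : T ⊆ A) (l : ℕ) :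
    (fun S => (((A ∩ S).card : ℚ) - l) * eT T S)
      = (∑ i ∈ A \ T, eT (insert i T)) + ((T.card : ℚ) - l) • eT T := by
  funext S
  simp only [Pi.add_apply, Finset.sum_apply, Pi.smul_apply, smul_eq_mul]
  by_cases h : T ⊆ S
  · have h1 : ∀ i ∈ A \ T, eT (insert i T) S = if i ∈ S then 1 else 0 := by
      intro i _
      simp only [eT, Finset.insert_subset_iff, h, and_true]
    rw [Finset.sum_congr rfl h1]
    rw [Finset.sum_ite_mem (A \ T) S (fun _ => (1:ℚ)), Finset.sum_const]
    have hTS : T ⊆ A ∩ S := Finset.subset_inter hT h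
    have : (A \ T) ∩ S = (A ∩ S) \ T := by
      ext i; simp [Finset.mem_sdiff, Finset.mem_inter]; tauto
    rw [this, Finset.card_sdiff_of_subset hTS]
    have hle : T.card ≤ (A ∩ S).card := Finset.card_le_card hTS
    simp only [eT, if_pos h]
    rw [nsmul_eq_mul, mul_one, Nat.cast_sub hle]
    ring
  · have h1 : ∀ i ∈ A \ T, eT (insert i T) S = 0 := by
      intro i _
      simp only [eT, Finset.insert_subset_iff]
      rw [if_neg (by tauto)]
    rw [Finset.sum_congr rfl h1]
    simp [eT, if_neg h]

lemma span_prod (A : Finset α) (m : Finset ℕ) :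
    (fun S => ∏ l ∈ m, (((A ∩ S).card : ℚ) - l)) ∈
      Submodule.span ℚ (eT '' {T : Finset α | T ⊆ A ∧ T.card ≤ m.card}) := by
  classical
  induction m using Finset.induction with
  | empty =>
      have : (fun S : Finset α => ∏ l ∈ (∅ : Finset ℕ), (((A ∩ S).card : ℚ) - l)) = eT ∅ := by
        funext S; simp [eT]
      rw [this]
      exact Submodule.subset_span ⟨∅, ⟨Finset.empty_subset _, by simp⟩, rfl⟩
  | @insert l m hl ih =>
      have key : ∀ g ∈ Submodule.span ℚ (eT '' {T : Finset α | T ⊆ A ∧ T.card ≤ m.card}),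
          (fun S => (((A ∩ S).card : ℚ) - l) * g S) ∈
            Submodule.span ℚ (eT '' {T : Finset α | T ⊆ A ∧ T.card ≤ m.card + 1}) := by
        intro g hg
        induction hg using Submodule.span_induction with
        | mem y hy =>
            obtain ⟨T, ⟨hTA, hTc⟩, rfl⟩ := hy
            rw [mul_eT A T hTA l]
            apply Submodule.add_mem
            · apply Submodule.sum_mem
              intro i hi
              apply Submodule.subset_span
              exact ⟨insert i T, ⟨Finset.insert_subset (Finset.mem_sdiff.mp hi).1 hTA,
                le_trans (Finset.card_insert_le _ _) (by omega)⟩, rfl⟩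
            · exact Submodule.smul_mem _ _ (Submodule.subset_span
                ⟨T, ⟨hTA, by omega⟩, rfl⟩)
        | zero =>
            have : (fun S => (((A ∩ S).card : ℚ) - l) * (0 : Finset α → ℚ) S) = 0 := by
              funext S; simp
            rw [this]; exact Submodule.zero_mem _
        | add y z _ _ hy hz =>
            have : (fun S => (((A ∩ S).card : ℚ) - l) * (y + z) S)
                = (fun S => (((A ∩ S).card : ℚ) - l) * y S)
                  + fun S => (((A ∩ S).card : ℚ) - l) * z S := by
              funext S; simp [mul_add]
            rw [this]; exact Submodule.add_mem _ hy hz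
        | smul a y _ hy =>
            have : (fun S => (((A ∩ S).card : ℚ) - l) * (a • y) S)
                = a • fun S => (((A ∩ S).card : ℚ) - l) * y S := by
              funext S; simp; ring
            rw [this]; exact Submodule.smul_mem _ _ hy
      have eq1 : (fun S => ∏ k ∈ insert l m, (((A ∩ S).card : ℚ) - k))
          = fun S => (((A ∩ S).card : ℚ) - l) *
              (fun S => ∏ k ∈ m, (((A ∩ S).card : ℚ) - k)) S := by
        funext S; rw [Finset.prod_insert hl]
      rw [eq1]
      have := key _ ih
      rw [Finset.card_insert_of_notMem hl]
      exact this

lemma key_bound (d : ℕ) (M : Finset ℕ) (hM : M.card ≤ d)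
    (U : Finset α) (G : Finset (Finset α)) (hGU : ∀ A ∈ G, A ⊆ U)
    (h1 : ∀ A ∈ G, ∀ B ∈ G, A ≠ B → (A ∩ B).card ∈ M ∧ (A ∩ B).card < A.card) :
    G.card ≤ (U.powerset.filter (fun T => T.card ≤ d)).card := by
  classical
  set 𝒯 : Finset (Finset α) := U.powerset.filter (fun T => T.card ≤ d) with h𝒯
  set v : G → (Finset α → ℚ) :=
    fun A => fun S => ∏ l ∈ M.filter (· < (A : Finset α).card),
      (((↑A ∩ S).card : ℚ) - l) with hv
  have hdiag : ∀ A : G, v A (↑A) ≠ 0 := by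
    intro A
    simp only [hv]
    apply Finset.prod_ne_zero_iff.mpr
    intro l hl
    have := (Finset.mem_filter.mp hl).2
    rw [Finset.inter_self]
    have : (l : ℚ) < ((A : Finset α).card : ℚ) := by exact_mod_cast this
    intro h; rw [sub_eq_zero] at h; exact absurd h.symm (ne_of_lt this)
  have hoff : ∀ A B : G, (A : Finset α) ≠ (B : Finset α) → v A (↑B) = 0 := by
    intro A B hne
    simp only [hv]
    apply Finset.prod_eq_zero (i := ((A : Finset α) ∩ (B : Finset α)).card)
    · exact Finset.mem_filter.mpr ⟨(h1 _ A.2 _ B.2 hne).1, (h1 _ A.2 _ B.2 hne).2⟩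
    · simp
  have hli : LinearIndependent ℚ v := by
    rw [Fintype.linearIndependent_iff]
    intro c hc A
    have := congrFun hc (↑A)
    simp only [Finset.sum_apply, Pi.smul_apply, smul_eq_mul, Pi.zero_apply] at this
    rw [Finset.sum_eq_single A] at this
    · rcases mul_eq_zero.mp this with h | h
      · exact h
      · exact absurd h (hdiag A)
    · intro B _ hne
      rw [hoff B A (fun h => hne (Subtype.ext h)), mul_zero]
    · intro h; exact absurd (Finset.mem_univ A) h
  have hspan : Set.range v ≤ ↑(Submodule.span ℚ ((𝒯.image eT : Finset (Finset α → ℚ)) : Set (Finset α → ℚ))) := by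
    rintro _ ⟨A, rfl⟩
    have h2 := span_prod (↑A : Finset α) (M.filter (· < (A : Finset α).card))
    apply Submodule.span_mono ?_ h2
    rintro _ ⟨T, ⟨hTA, hTc⟩, rfl⟩
    simp only [Finset.coe_image, Set.mem_image, Finset.mem_coe]
    exact ⟨T, Finset.mem_filter.mpr ⟨Finset.mem_powerset.mpr (hTA.trans (hGU _ A.2)),
      le_trans hTc (le_trans (Finset.card_filter_le _ _) hM)⟩, rfl⟩
  have hcard := linearIndependent_le_span' v hli _ hspan
  rw [Cardinal.mk_fintype] at hcard
  have hcard' : Fintype.card G ≤ Fintype.card ((𝒯.image eT : Finset (Finset α → ℚ)) : Set (Finset α → ℚ)) := by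
    exact_mod_cast hcard
  calc G.card = Fintype.card G := (Fintype.card_coe G).symm
    _ ≤ (𝒯.image eT).card := by simpa using hcard'
    _ ≤ 𝒯.card := Finset.card_image_le

lemma count_lemma (U : Finset α) (d : ℕ) :
    (U.powerset.filter (fun T => T.card ≤ d)).card
      = ∑ i ∈ Finset.range (d+1), (U.card).choose i := by
  classical
  have heq : U.powerset.filter (fun T => T.card ≤ d)
      = (Finset.range (d+1)).biUnion (fun i => U.powersetCard i) := by
    ext T
    simp only [Finset.mem_filter, Finset.mem_powerset, Finset.mem_biUnion,
      Finset.mem_range, Finset.mem_powersetCard]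
    constructor
    · rintro ⟨h1, h2⟩; exact ⟨T.card, by omega, h1, rfl⟩
    · rintro ⟨i, hi, h1, rfl⟩; exact ⟨h1, by omega⟩
  rw [heq, Finset.card_biUnion]
  · exact Finset.sum_congr rfl (fun i _ => Finset.card_powersetCard i U)
  · intro i _ j _ hij
    apply Finset.disjoint_left.mpr
    intro T hT hT'
    rw [Finset.mem_powersetCard] at hT hT'
    omega

end Stmt17Aux

theorem stmt_17 (n s : ℕ) (L : Finset ℕ) (hL : L.card = s) (h0 : 0 ∈ L)
    (hLne : L ≠ Finset.range s) (hn : n ≥ 3 * s ^ 2)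
    (F : Finset (Finset (Fin n)))
    (hSperner : ∀ A ∈ F, ∀ B ∈ F, A ≠ B → ¬ A ⊆ B)
    (hInt : ∀ A ∈ F, ∀ B ∈ F, A ≠ B → (A ∩ B).card ∈ L) :
    ∀ x : Fin n, (F.filter (fun A => x ∈ A)).card ≤
      ∑ i ∈ Finset.range s, (n - 1).choose i := by
  classical
  intro x
  have hs : 1 ≤ s := by
    rw [← hL]; exact Finset.card_pos.mpr ⟨0, h0⟩
  set Fx := F.filter (fun A => x ∈ A) with hFx
  set G : Finset (Finset (Fin n)) := Fx.image (fun A => A.erase x) with hG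
  have hmemx : ∀ A ∈ Fx, x ∈ A ∧ A ∈ F := by
    intro A hA; rw [hFx, Finset.mem_filter] at hA; exact ⟨hA.2, hA.1⟩
  have hinj : Set.InjOn (fun A : Finset (Fin n) => A.erase x) (Fx : Set (Finset (Fin n))) := by
    intro A hA B hB h
    have hxA := (hmemx A hA).1
    have hxB := (hmemx B hB).1
    have h' : A.erase x = B.erase x := h
    have : insert x (A.erase x) = insert x (B.erase x) := by rw [h']
    rwa [Finset.insert_erase hxA, Finset.insert_erase hxB] at this
  have hcardG : G.card = Fx.card := Finset.card_image_of_injOn hinj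
  set U : Finset (Fin n) := Finset.univ.erase x with hU
  have hUcard : U.card = n - 1 := by
    rw [hU, Finset.card_erase_of_mem (Finset.mem_univ x), Finset.card_univ,
      Fintype.card_fin]
  set M : Finset ℕ := (L.erase 0).image (· - 1) with hM
  have hMcard : M.card = s - 1 := by
    rw [hM, Finset.card_image_of_injOn, Finset.card_erase_of_mem h0, hL]
    intro a ha b hb hab
    simp only [Finset.mem_coe, Finset.mem_erase] at ha hb
    have hab' : a - 1 = b - 1 := hab
    omega
  have hGU : ∀ A ∈ G, A ⊆ U := by
    intro A hA
    rw [hG, Finset.mem_image] at hA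
    obtain ⟨B, _, rfl⟩ := hA
    exact Finset.erase_subset_erase x (Finset.subset_univ B)
  have h1 : ∀ A ∈ G, ∀ B ∈ G, A ≠ B → (A ∩ B).card ∈ M ∧ (A ∩ B).card < A.card := by
    intro A' hA' B' hB' hne
    rw [hG, Finset.mem_image] at hA' hB'
    obtain ⟨A, hA, rfl⟩ := hA'
    obtain ⟨B, hB, rfl⟩ := hB'
    have hAB : A ≠ B := fun h => hne (by rw [h])
    have hxA := (hmemx A hA).1
    have hxB := (hmemx B hB).1
    have hAF := (hmemx A hA).2
    have hBF := (hmemx B hB).2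
    have hintAB : (A ∩ B).card ∈ L := hInt A hAF B hBF hAB
    have hxAB : x ∈ A ∩ B := Finset.mem_inter.mpr ⟨hxA, hxB⟩
    have hinter : A.erase x ∩ B.erase x = (A ∩ B).erase x := by
      ext i
      simp only [Finset.mem_inter, Finset.mem_erase]
      tauto
    have hcard1 : (A.erase x ∩ B.erase x).card = (A ∩ B).card - 1 := by
      rw [hinter, Finset.card_erase_of_mem hxAB]
    have hpos : 1 ≤ (A ∩ B).card := Finset.card_pos.mpr ⟨x, hxAB⟩
    have hstrict : (A ∩ B).card < A.card := by
      have hsub : A ∩ B ⊆ A := Finset.inter_subset_left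
      rcases lt_or_eq_of_le (Finset.card_le_card hsub) with h | h
      · exact h
      · exfalso
        have : A ∩ B = A := Finset.eq_of_subset_of_card_le hsub (le_of_eq h.symm)
        exact hSperner A hAF B hBF hAB (by rw [← this]; exact Finset.inter_subset_right)
    constructor
    · rw [hcard1, hM, Finset.mem_image]
      exact ⟨(A ∩ B).card, Finset.mem_erase.mpr ⟨by omega, hintAB⟩, rfl⟩
    · rw [hcard1, Finset.card_erase_of_mem hxA]
      omega
  have hkey := Stmt17Aux.key_bound (s - 1) M (le_of_eq hMcard) U G hGU h1
  rw [Stmt17Aux.count_lemma, hUcard] at hkey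
  have hrange : s - 1 + 1 = s := by omega
  rw [hrange] at hkey
  omega
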